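/- Let A be a commutative ℂ-algebra with basis Δ₀,Δ₁,Δ₂,Δ₃ where Δ₀ = 1 and multiplication by Δ₁ is given by Δ₁Δ₁ = 2Δ₂, Δ₁Δ₂ = Δ₃ + qΔ₀, Δ₁Δ₃ = qΔ₁, for a fixed q ≠ 0, and assume A is generated by Δ₁. Then the characteristic polynomial of multiplication by Δ₁ on A is ξ(ξ³ − 4q), and A is isomorphic as a ℂ-algebra to ℂ⁴ (i.e. A is semisimple with 4 one-dimensional factors); the corresponding points of Spec A are P₀ = (Δ₁,Δ₂,Δ₃) = (0,0,−q) and Pᵢ = (ξᵢ, ξᵢ²/2, q) for the three roots ξᵢ of ξ³ = 4q. -/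

import Mathlib

open Polynomial Module

theorem my_det_fin_four {R : Type*} [CommRing R] (M : Matrix (Fin 4) (Fin 4) R) :
    M.det =
      M 0 0 * (M 1 1 * (M 2 2 * M 3 3 - M 2 3 * M 3 2) - M 1 2 * (M 2 1 * M 3 3 - M 2 3 * M 3 1)
          + M 1 3 * (M 2 1 * M 3 2 - M 2 2 * M 3 1))
      - M 0 1 * (M 1 0 * (M 2 2 * M 3 3 - M 2 3 * M 3 2) - M 1 2 * (M 2 0 * M 3 3 - M 2 3 * M 3 0)
          + M 1 3 * (M 2 0 * M 3 2 - M 2 2 * M 3 0))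
      + M 0 2 * (M 1 0 * (M 2 1 * M 3 3 - M 2 3 * M 3 1) - M 1 1 * (M 2 0 * M 3 3 - M 2 3 * M 3 0)
          + M 1 3 * (M 2 0 * M 3 1 - M 2 1 * M 3 0))
      - M 0 3 * (M 1 0 * (M 2 1 * M 3 2 - M 2 2 * M 3 1) - M 1 1 * (M 2 0 * M 3 2 - M 2 2 * M 3 0)
          + M 1 2 * (M 2 0 * M 3 1 - M 2 1 * M 3 0)) := by
  rw [Matrix.det_succ_row_zero]
  simp (config := { decide := true }) [Fin.sum_univ_succ, Matrix.det_fin_three, Fin.succAbove,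
    Matrix.submatrix_apply, show Fin.succ 2 = (3 : Fin 4) from rfl,
    show Fin.castSucc (2 : Fin 3) = (2 : Fin 4) from rfl]
  ring

/-- Let `A` be a commutative ℂ-algebra with basis `Δ₀ = 1, Δ₁, Δ₂, Δ₃`,
multiplication by `Δ₁` given by `Δ₁Δ₁ = 2Δ₂`, `Δ₁Δ₂ = Δ₃ + qΔ₀`, `Δ₁Δ₃ = qΔ₁` (`q ≠ 0`),
and generated by `Δ₁`.  Then the characteristic polynomial of multiplication by `Δ₁` is
`ξ(ξ³ − 4q)`, `A ≅ ℂ⁴` as a ℂ-algebra, and the points of `Spec A` are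
`P₀ = (0,0,−q)` and `Pᵢ = (ξᵢ, ξᵢ²/2, q)` for the three roots `ξᵢ` of `ξ³ = 4q`. -/
theorem small_quantum_cohomology_Q3_semisimple (q : ℂ) (hq : q ≠ 0)
    (A : Type) [CommRing A] [Algebra ℂ A] (B : Basis (Fin 4) ℂ A)
    (h0 : B 0 = 1)
    (h11 : B 1 * B 1 = (2 : ℂ) • B 2)
    (h12 : B 1 * B 2 = B 3 + q • B 0)
    (h13 : B 1 * B 3 = q • B 1)
    (hgen : Algebra.adjoin ℂ {B 1} = ⊤) :
    Matrix.charpoly ((LinearMap.toMatrix B B) (LinearMap.mulLeft ℂ (B 1))) =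
        X * (X ^ 3 - Polynomial.C (4 * q)) ∧
    Nonempty (A ≃ₐ[ℂ] (Fin 4 → ℂ)) ∧
    (∀ φ : A →ₐ[ℂ] ℂ,
      (φ (B 1) = 0 ∧ φ (B 2) = 0 ∧ φ (B 3) = -q) ∨
      (∃ ξ : ℂ, ξ ^ 3 = 4 * q ∧ φ (B 1) = ξ ∧ φ (B 2) = ξ ^ 2 / 2 ∧ φ (B 3) = q)) ∧
    (∃ φ : A →ₐ[ℂ] ℂ, φ (B 1) = 0 ∧ φ (B 2) = 0 ∧ φ (B 3) = -q) ∧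
    (∀ ξ : ℂ, ξ ^ 3 = 4 * q →
      ∃ φ : A →ₐ[ℂ] ℂ, φ (B 1) = ξ ∧ φ (B 2) = ξ ^ 2 / 2 ∧ φ (B 3) = q) := by
  classical
  have h10 : B 1 * B 0 = B 1 := by rw [h0, mul_one]
  -- Part 1 : the characteristic polynomial
  have part1 : Matrix.charpoly ((LinearMap.toMatrix B B) (LinearMap.mulLeft ℂ (B 1))) =
      X * (X ^ 3 - Polynomial.C (4 * q)) := by
    have hM : (LinearMap.toMatrix B B) (LinearMap.mulLeft ℂ (B 1)) =
        !![0,0,q,0; 1,0,0,q; 0,2,0,0; 0,0,1,0] := by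
      ext i j
      fin_cases i <;> fin_cases j <;>
        simp [LinearMap.toMatrix_apply, LinearMap.mulLeft_apply, h10, h11, h12, h13,
          Basis.repr_self, Finsupp.single_apply, Matrix.cons_val_zero, Matrix.cons_val_one,
          Matrix.head_cons, Matrix.vecHead, Matrix.vecTail]
    rw [hM, Matrix.charpoly, my_det_fin_four]
    simp [Matrix.charmatrix_apply, Matrix.diagonal, map_ofNat, Matrix.vecHead, Matrix.vecTail,
      Function.comp]
    ring
  -- basic algebraic consequences
  set p : ℂ[X] := X ^ 4 - C (4 * q) * X with hp
  have hp0 : p ≠ 0 := by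
    intro h
    have := congrArg (fun r => coeff r 4) h
    simp [hp, coeff_X_pow] at this
  have hpdeg : p.natDegree = 4 := by
    rw [hp]
    compute_degree!
  have hpow : B 1 ^ 4 = (4 * q) • B 1 := by
    have e1 : B 1 ^ 4 = B 1 * (B 1 * (B 1 * B 1)) := by ring
    rw [e1, h11, mul_smul_comm, h12, mul_smul_comm, mul_add, h13, mul_smul_comm, h10,
      smul_add, smul_smul, ← add_smul, show (2:ℂ)*q + 2*q = 4*q by ring]
  have haev : aeval (B 1) p = 0 := by
    rw [hp, map_sub, map_mul, aeval_X_pow, aeval_C, aeval_X, ← Algebra.smul_def, hpow, sub_self]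
  set g : AdjoinRoot p →ₐ[ℂ] A := AdjoinRoot.liftAlgHom p (Algebra.ofId ℂ A) (B 1) haev with hg
  have heroot : g (AdjoinRoot.root p) = B 1 := by
    rw [hg]; exact AdjoinRoot.liftAlgHom_root p (Algebra.ofId ℂ A) (B 1) haev
  have hgsurj : Function.Surjective g := by
    rw [← AlgHom.range_eq_top, ← top_le_iff, ← hgen]
    apply Algebra.adjoin_le
    rw [Set.singleton_subset_iff]
    exact ⟨AdjoinRoot.root p, heroot⟩
  haveI : Module.Finite ℂ A := Module.Finite.of_basis B
  have finA : finrank ℂ A = 4 := by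
    rw [finrank_eq_card_basis B, Fintype.card_fin]
  haveI : Module.Finite ℂ (AdjoinRoot p) :=
    Module.Finite.of_basis (AdjoinRoot.powerBasis hp0).basis
  have finAR : finrank ℂ (AdjoinRoot p) = 4 := by
    rw [(AdjoinRoot.powerBasis hp0).finrank, AdjoinRoot.powerBasis_dim, hpdeg]
  have hginj : Function.Injective g :=
    (LinearMap.injective_iff_surjective_of_finrank_eq_finrank
      (f := g.toLinearMap) (by rw [finAR, finA])).mpr hgsurj
  set e : AdjoinRoot p ≃ₐ[ℂ] A := AlgEquiv.ofBijective g ⟨hginj, hgsurj⟩ with he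
  have hesymm : e.symm (B 1) = AdjoinRoot.root p := by
    apply e.injective
    rw [AlgEquiv.apply_symm_apply]
    exact heroot.symm
  have hB2 : B 2 = (2:ℂ)⁻¹ • (B 1 * B 1) := by rw [h11, smul_smul]; norm_num
  have hB3 : B 3 = B 1 * B 2 - q • (1 : A) := by
    rw [h12, h0, add_sub_cancel_right]
  -- construction of algebra homomorphisms from roots of `p`
  have mkφ : ∀ ξ : ℂ, ξ ^ 4 = 4 * q * ξ →
      ∃ φ : A →ₐ[ℂ] ℂ, φ (B 1) = ξ ∧ φ (B 2) = ξ ^ 2 / 2 ∧ φ (B 3) = ξ ^ 3 / 2 - q := by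
    intro ξ hξ
    have haevξ : aeval ξ p = 0 := by
      rw [hp, map_sub, map_mul, aeval_X_pow, aeval_C, aeval_X, Algebra.algebraMap_self_apply]
      linear_combination hξ
    set φ : A →ₐ[ℂ] ℂ := (AdjoinRoot.liftAlgHom p (Algebra.ofId ℂ ℂ) ξ haevξ).comp ↑e.symm with hφdef
    have hφ1 : φ (B 1) = ξ := by
      show (AdjoinRoot.liftAlgHom p (Algebra.ofId ℂ ℂ) ξ haevξ) (e.symm (B 1)) = ξ
      rw [hesymm]; exact AdjoinRoot.liftAlgHom_root _ _ _ _
    have hφ2 : φ (B 2) = ξ ^ 2 / 2 := by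
      rw [hB2, map_smul, map_mul, hφ1, smul_eq_mul]
      ring
    have hφ3 : φ (B 3) = ξ ^ 3 / 2 - q := by
      rw [hB3, map_sub, map_mul, hφ1, hφ2, map_smul, map_one, smul_eq_mul, mul_one]
      ring
    exact ⟨φ, hφ1, hφ2, hφ3⟩
  -- the four roots
  obtain ⟨ζ, hζ⟩ : ∃ z : ℂ, z ^ 3 = 4 * q :=
    ⟨(4 * q) ^ ((((3:ℕ)):ℂ))⁻¹, Complex.cpow_nat_inv_pow _ (by norm_num)⟩
  have hζ0 : ζ ≠ 0 := by
    intro h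
    rw [h] at hζ
    simp only [ne_eq, zero_pow, OfNat.ofNat_ne_zero, not_false_eq_true] at hζ
    exact hq (by linear_combination -hζ/4)
  have prim := Complex.isPrimitiveRoot_exp 3 (by norm_num)
  set ω : ℂ := Complex.exp (2 * Real.pi * Complex.I / 3) with hωdef
  have hω3 : ω ^ 3 = 1 := prim.pow_eq_one
  have hω1 : ω ≠ 1 := prim.ne_one (by norm_num)
  have hω0 : ω ≠ 0 := by
    intro h
    rw [h] at hω3
    simp at hω3
  have hW : ω ^ 2 + ω + 1 = 0 := by
    have h := mul_eq_zero.mp (show (ω - 1) * (ω ^ 2 + ω + 1) = 0 by linear_combination hω3)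
    rcases h with h | h
    · exact absurd (sub_eq_zero.mp h) hω1
    · exact h
  have hωω : ω - ω ^ 2 ≠ 0 := by
    intro h
    rcases mul_eq_zero.mp (show ω * (1 - ω) = 0 by linear_combination h) with h' | h'
    · exact hω0 h'
    · exact hω1 (sub_eq_zero.mp h').symm
  obtain ⟨φ0, hφ01, hφ02, hφ03⟩ := mkφ 0 (by ring)
  obtain ⟨φ1, hφ11, hφ12, hφ13⟩ := mkφ ζ (by linear_combination ζ * hζ)
  obtain ⟨φ2, hφ21, hφ22, hφ23⟩ := mkφ (ω * ζ)
    (by linear_combination (ω * ζ^4) * hω3 + (ω * ζ) * hζ)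
  obtain ⟨φ3, hφ31, hφ32, hφ33⟩ := mkφ (ω ^ 2 * ζ)
    (by linear_combination (ω^2 * (ω^3 + 1) * ζ^4) * hω3 + (ω^2 * ζ) * hζ)
  have hφ02' : φ0 (B 2) = 0 := by rw [hφ02]; norm_num
  have hφ03' : φ0 (B 3) = -q := by rw [hφ03]; norm_num
  have hφ13' : φ1 (B 3) = q := by rw [hφ13, hζ]; ring
  have hφ23' : φ2 (B 3) = q := by
    rw [hφ23]; linear_combination (ζ^3/2) * hω3 + (1/2) * hζ
  have hφ33' : φ3 (B 3) = q := by
    rw [hφ33]; linear_combination ((ω^3 + 1) * ζ^3/2) * hω3 + (1/2) * hζ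
  -- the algebra isomorphism with ℂ⁴
  set Φ : A →ₐ[ℂ] (Fin 4 → ℂ) := Pi.algHom ℂ (fun _ => ℂ) ![φ0, φ1, φ2, φ3] with hΦdef
  have hsum : ∀ a : A, a = B.repr a 0 • (1:A) + B.repr a 1 • B 1
      + B.repr a 2 • B 2 + B.repr a 3 • B 3 := by
    intro a
    have h := B.sum_repr a
    rw [Fin.sum_univ_four, h0] at h
    exact h.symm
  have expand : ∀ (φ : A →ₐ[ℂ] ℂ) (a : A),
      φ a = B.repr a 0 + B.repr a 1 * φ (B 1) + B.repr a 2 * φ (B 2) + B.repr a 3 * φ (B 3) := by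
    intro φ a
    conv_lhs => rw [hsum a]
    simp only [map_add, map_smul, map_one, smul_eq_mul, mul_one]
  have hΦinj : Function.Injective Φ := by
    rw [injective_iff_map_eq_zero]
    intro a ha
    have E : ∀ j : Fin 4, (![φ0, φ1, φ2, φ3] j) a = 0 := by
      intro j
      have := congrFun ha j
      simpa [hΦdef] using this
    have E0 : φ0 a = 0 := by simpa using E 0
    have E1 : φ1 a = 0 := by simpa using E 1
    have E2 : φ2 a = 0 := by simpa using E 2
    have E3 : φ3 a = 0 := by simpa using E 3
    rw [expand φ0 a, hφ01, hφ02', hφ03'] at E0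
    rw [expand φ1 a, hφ11, hφ12, hφ13'] at E1
    rw [expand φ2 a, hφ21, hφ22, hφ23'] at E2
    rw [expand φ3 a, hφ31, hφ32, hφ33'] at E3
    have hc3 : B.repr a 3 = 0 := by
      have h : q * B.repr a 3 = 0 := by
        linear_combination (1/6 : ℂ) * (E1 + E2 + E3) - (1/2 : ℂ) * E0
          - (ζ * B.repr a 1 / 6 + ζ^2 * B.repr a 2 / 12) * hW
          - (ζ^2 * B.repr a 2 * ω / 12) * hω3
      exact (mul_eq_zero.mp h).resolve_left hq
    have hc0 : B.repr a 0 = 0 := by linear_combination E0 + q * hc3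
    have hc2 : B.repr a 2 = 0 := by
      have h : ζ^2 * (ω - ω^2) * B.repr a 2 = 0 := by
        linear_combination (2*ω) * E1 - 2 * E2 - 2*(ω - 1) * hc0 - 2*(ω - 1)*q * hc3
      exact (mul_eq_zero.mp h).resolve_left (mul_ne_zero (pow_ne_zero 2 hζ0) hωω)
    have hc1 : B.repr a 1 = 0 := by
      have h : ζ * B.repr a 1 = 0 := by
        linear_combination E1 - hc0 - (ζ^2/2) * hc2 - q * hc3
      exact (mul_eq_zero.mp h).resolve_left hζ0
    have : B.repr a = 0 := by
      ext i
      fin_cases i <;> simpa [hc0, hc1, hc2, hc3]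
    simpa using congrArg B.repr.symm this
  have finP : finrank ℂ (Fin 4 → ℂ) = 4 := by simp
  have hΦsurj : Function.Surjective Φ :=
    (LinearMap.injective_iff_surjective_of_finrank_eq_finrank
      (f := Φ.toLinearMap) (by rw [finA, finP])).mp hΦinj
  refine ⟨part1, ⟨AlgEquiv.ofBijective Φ ⟨hΦinj, hΦsurj⟩⟩, ?_, ?_, ?_⟩
  · -- classification of all algebra homomorphisms
    intro φ
    have k2 : φ (B 2) = φ (B 1) ^ 2 / 2 := by
      have h := congrArg φ h11
      rw [map_mul, map_smul, smul_eq_mul] at h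
      linear_combination -h/2
    have k3 : φ (B 3) = φ (B 1) ^ 3 / 2 - q := by
      have h := congrArg φ h12
      rw [map_mul, map_add, map_smul, h0, map_one φ, smul_eq_mul, mul_one, k2] at h
      linear_combination -h
    have k4 : φ (B 1) ^ 4 = 4 * q * φ (B 1) := by
      have h := congrArg φ h13
      rw [map_mul, map_smul, smul_eq_mul, k3] at h
      linear_combination 2 * h
    by_cases hb : φ (B 1) = 0
    · left
      refine ⟨hb, by rw [k2, hb]; norm_num, by rw [k3, hb]; norm_num⟩
    · right
      have hξ3 : φ (B 1) ^ 3 = 4 * q := by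
        have h : φ (B 1) * (φ (B 1) ^ 3 - 4 * q) = 0 := by linear_combination k4
        have := (mul_eq_zero.mp h).resolve_left hb
        linear_combination this
      exact ⟨φ (B 1), hξ3, rfl, k2, by rw [k3, hξ3]; ring⟩
  · exact ⟨φ0, hφ01, hφ02', hφ03'⟩
  · intro ξ hξ3
    obtain ⟨φ, hh1, hh2, hh3⟩ := mkφ ξ (by linear_combination ξ * hξ3)
    exact ⟨φ, hh1, hh2, by rw [hh3, hξ3]; ring⟩
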